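/- Global asymptotic stability of a single-reservoir ESN (Theorem 1): let W^res be an N×N real matrix with largest singular value (ℓ²-operator norm) strictly less than 1, let W^in be an N×D real matrix, and let u : ℕ → ℝ^D be any input sequence. If x, x̃ : ℕ → ℝ^N are two state sequences both satisfying x(t+1) = tanh.(W^res x(t) + W^in u(t+1)) for all t ∈ ℕ, then ‖x(t) − x̃(t)‖₂ → 0 as t → ∞. -/

import Mathlib

open Filter Topology

/-- Componentwise hyperbolic tangent on Euclidean space. -/
noncomputable def tanhVec {n : ℕ} (v : EuclideanSpace ℝ (Fin n)) : EuclideanSpace ℝ (Fin n) :=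
  WithLp.toLp 2 (fun i => Real.tanh (v i))

/-- The action `x ↦ W x` of a matrix on Euclidean space (equal to `Matrix.mulVec`). -/
noncomputable def mulVecE {m n : ℕ} (W : Matrix (Fin m) (Fin n) ℝ)
    (x : EuclideanSpace ℝ (Fin n)) : EuclideanSpace ℝ (Fin m) :=
  Matrix.toEuclideanLin W x

/-- The ℓ²-operator norm of a matrix (its largest singular value). -/
noncomputable def opNorm {m n : ℕ} (W : Matrix (Fin m) (Fin n) ℝ) : ℝ :=
  ‖LinearMap.toContinuousLinearMap (Matrix.toEuclideanLin W)‖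

lemma hasDerivAt_tanh (x : ℝ) :
    HasDerivAt Real.tanh (1 / Real.cosh x ^ 2) x := by
  have h := (Real.hasDerivAt_sinh x).div (Real.hasDerivAt_cosh x) (Real.cosh_pos x).ne'
  have hf : (Real.sinh / Real.cosh) = Real.tanh := by
    funext y; rw [Pi.div_apply, Real.tanh_eq_sinh_div_cosh]
  rw [hf] at h
  refine h.congr_deriv ?_
  rw [← Real.cosh_sq_sub_sinh_sq x]; ring

lemma tanh_lipschitz : LipschitzWith 1 Real.tanh := by
  apply lipschitzWith_of_nnnorm_deriv_le (fun x => (hasDerivAt_tanh x).differentiableAt)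
  intro x
  rw [(hasDerivAt_tanh x).deriv]
  have h1 : (1 : ℝ) ≤ Real.cosh x ^ 2 := by
    have := Real.one_le_cosh x
    nlinarith
  have : ‖(1 : ℝ) / Real.cosh x ^ 2‖ ≤ 1 := by
    rw [Real.norm_eq_abs, abs_div, abs_one]
    rw [div_le_one (by positivity : (0:ℝ) < |Real.cosh x ^ 2|)]
    calc (1:ℝ) ≤ Real.cosh x ^ 2 := h1
    _ ≤ |Real.cosh x ^ 2| := le_abs_self _
  exact_mod_cast this

lemma tanhVec_lipschitz {n : ℕ} (a b : EuclideanSpace ℝ (Fin n)) :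
    ‖tanhVec a - tanhVec b‖ ≤ ‖a - b‖ := by
  rw [EuclideanSpace.norm_eq, EuclideanSpace.norm_eq]
  apply Real.sqrt_le_sqrt
  apply Finset.sum_le_sum
  intro i _
  have := tanh_lipschitz.dist_le_mul (a i) (b i)
  simp only [NNReal.coe_one, one_mul, Real.dist_eq] at this
  have h2 : |Real.tanh (a i) - Real.tanh (b i)| ≤ |a i - b i| := this
  simp only [tanhVec]
  gcongr
  exact h2

lemma mulVecE_norm_le {m n : ℕ} (W : Matrix (Fin m) (Fin n) ℝ)
    (v : EuclideanSpace ℝ (Fin n)) : ‖mulVecE W v‖ ≤ opNorm W * ‖v‖ := by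
  have := (LinearMap.toContinuousLinearMap (Matrix.toEuclideanLin W)).le_opNorm v
  simpa [mulVecE, opNorm] using this

/-- Global asymptotic stability of a single-reservoir ESN (Theorem 1). -/
theorem esn_global_asymptotic_stability (N D : ℕ)
    (Wres : Matrix (Fin N) (Fin N) ℝ) (Win : Matrix (Fin N) (Fin D) ℝ)
    (hW : opNorm Wres < 1)
    (u : ℕ → EuclideanSpace ℝ (Fin D))
    (x x' : ℕ → EuclideanSpace ℝ (Fin N))
    (hx : ∀ t, x (t + 1) = tanhVec (mulVecE Wres (x t) + mulVecE Win (u (t + 1))))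
    (hx' : ∀ t, x' (t + 1) = tanhVec (mulVecE Wres (x' t) + mulVecE Win (u (t + 1)))) :
    Tendsto (fun t : ℕ => ‖x t - x' t‖) atTop (𝓝 0) := by
  set K := opNorm Wres with hK
  have hK0 : 0 ≤ K := norm_nonneg _
  have hstep : ∀ t, ‖x (t+1) - x' (t+1)‖ ≤ K * ‖x t - x' t‖ := by
    intro t
    rw [hx t, hx' t]
    calc ‖tanhVec (mulVecE Wres (x t) + mulVecE Win (u (t+1)))
          - tanhVec (mulVecE Wres (x' t) + mulVecE Win (u (t+1)))‖
        ≤ ‖(mulVecE Wres (x t) + mulVecE Win (u (t+1)))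
          - (mulVecE Wres (x' t) + mulVecE Win (u (t+1)))‖ := tanhVec_lipschitz _ _
      _ = ‖mulVecE Wres (x t) - mulVecE Wres (x' t)‖ := by congr 1; abel
      _ = ‖mulVecE Wres (x t - x' t)‖ := by
          simp [mulVecE, ← map_sub]
      _ ≤ K * ‖x t - x' t‖ := mulVecE_norm_le _ _
  have hbound : ∀ t, ‖x t - x' t‖ ≤ ‖x 0 - x' 0‖ * K ^ t := by
    intro t
    induction t with
    | zero => simp
    | succ n ih =>
      calc ‖x (n+1) - x' (n+1)‖ ≤ K * ‖x n - x' n‖ := hstep n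
        _ ≤ K * (‖x 0 - x' 0‖ * K ^ n) := by
            exact mul_le_mul_of_nonneg_left ih hK0
        _ = ‖x 0 - x' 0‖ * K ^ (n+1) := by ring
  have hgeo : Tendsto (fun t : ℕ => ‖x 0 - x' 0‖ * K ^ t) atTop (𝓝 0) := by
    have := tendsto_pow_atTop_nhds_zero_of_lt_one hK0 hW
    simpa using this.const_mul (‖x 0 - x' 0‖)
  exact squeeze_zero (fun t => norm_nonneg _) hbound hgeo
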